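/- (Lemma 2.2) Let x : ℕ → ℝ be a sequence with x(j) > 0 for all j. Then for every n ≥ 1, δ_n^α (j ↦ x(j) − 1 − ln x(j)) ≤ (1 − 1/x(n))·δ_n^α x. -/

import Mathlib

open Filter Finset

/-- L1-scheme coefficient `b_j^{(β)} = (j+1)^β - j^β` (real powers). -/
noncomputable def bcoef (β : ℝ) (j : ℕ) : ℝ := ((j : ℝ) + 1) ^ β - (j : ℝ) ^ β

/-- L1 discretization of the Caputo derivative of order `α` with time step `Δt`,
evaluated at time level `n ≥ 1`:
`δ_n^α f = ((Δt)^{-α}/Γ(2-α)) (f n - b_{n-1} f 0 - Σ_{j=1}^{n-1} (b_{j-1}-b_j) f (n-j))`. -/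
noncomputable def L1 (α Δt : ℝ) (f : ℕ → ℝ) (n : ℕ) : ℝ :=
  Δt ^ (-α) / Real.Gamma (2 - α) *
    (f n - bcoef (1 - α) (n - 1) * f 0 -
      ∑ j ∈ Finset.Icc 1 (n - 1), (bcoef (1 - α) (j - 1) - bcoef (1 - α) j) * f (n - j))

lemma bcoef_zero {β : ℝ} (hβ : β ≠ 0) : bcoef β 0 = 1 := by
  simp [bcoef, Real.zero_rpow hβ]

lemma bcoef_pos {β : ℝ} (hβ : 0 < β) (j : ℕ) : 0 < bcoef β j := by
  have : ((j : ℝ)) ^ β < ((j : ℝ) + 1) ^ β :=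
    Real.rpow_lt_rpow (Nat.cast_nonneg j) (by linarith) hβ
  simpa [bcoef] using sub_pos.mpr this

lemma bcoef_succ_le {β : ℝ} (hβ0 : 0 < β) (hβ1 : β < 1) (k : ℕ) :
    bcoef β (k + 1) ≤ bcoef β k := by
  have hconc := (Real.strictConcaveOn_rpow hβ0 hβ1).concaveOn
  have h := hconc.2 (Set.mem_Ici.mpr (Nat.cast_nonneg k))
    (Set.mem_Ici.mpr (show (0:ℝ) ≤ (k : ℝ) + 2 by positivity))
    (show (0:ℝ) ≤ 1/2 by norm_num) (show (0:ℝ) ≤ 1/2 by norm_num)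
    (show (1:ℝ)/2 + 1/2 = 1 by norm_num)
  have hmid : ((1:ℝ)/2) • (k : ℝ) + ((1:ℝ)/2) • ((k : ℝ) + 2) = (k : ℝ) + 1 := by
    simp [smul_eq_mul]; ring
  rw [hmid] at h
  simp only [smul_eq_mul] at h
  simp only [bcoef]
  push_cast
  have h2 : ((k : ℝ) + 1 + 1) ^ β = ((k : ℝ) + 2) ^ β := by ring_nf
  linarith

/-- Telescoping form of the L1 operator. -/
lemma L1_eq (α Δt : ℝ) (hα0 : 0 < α) (hα1 : α < 1) (f : ℕ → ℝ) (n : ℕ) (hn : 1 ≤ n) :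
    L1 α Δt f n = Δt ^ (-α) / Real.Gamma (2 - α) *
      (bcoef (1 - α) (n - 1) * (f n - f 0) +
        ∑ j ∈ Finset.Icc 1 (n - 1), (bcoef (1 - α) (j - 1) - bcoef (1 - α) j) * (f n - f (n - j))) := by
  have hβ : (1 : ℝ) - α ≠ 0 := by linarith
  have htel : ∑ j ∈ Finset.Icc 1 (n - 1), (bcoef (1 - α) (j - 1) - bcoef (1 - α) j)
      = 1 - bcoef (1 - α) (n - 1) := by
    have : Finset.Icc 1 (n - 1) = Finset.Ico 1 n := by
      ext j; simp [Finset.mem_Icc, Finset.mem_Ico]; omega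
    rw [this, Finset.sum_Ico_eq_sum_range]
    have : ∀ i ∈ Finset.range (n - 1),
        bcoef (1 - α) (1 + i - 1) - bcoef (1 - α) (1 + i)
          = bcoef (1 - α) i - bcoef (1 - α) (i + 1) := by
      intro i _; congr 2 <;> omega
    rw [Finset.sum_congr rfl this, Finset.sum_range_sub' (fun i => bcoef (1 - α) i) (n - 1),
      bcoef_zero hβ]
  unfold L1
  congr 1
  have hsplit : ∑ j ∈ Finset.Icc 1 (n - 1),
      (bcoef (1 - α) (j - 1) - bcoef (1 - α) j) * (f n - f (n - j))
      = (∑ j ∈ Finset.Icc 1 (n - 1), (bcoef (1 - α) (j - 1) - bcoef (1 - α) j)) * f n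
        - ∑ j ∈ Finset.Icc 1 (n - 1), (bcoef (1 - α) (j - 1) - bcoef (1 - α) j) * f (n - j) := by
    rw [Finset.sum_mul, ← Finset.sum_sub_distrib]
    exact Finset.sum_congr rfl fun j _ => by ring
  rw [hsplit, htel]
  ring

lemma key_ineq (a b : ℝ) (ha : 0 < a) (hb : 0 < b) :
    (a - 1 - Real.log a) - (b - 1 - Real.log b) ≤ (1 - 1 / a) * (a - b) := by
  have h := Real.log_le_sub_one_of_pos (div_pos hb ha)
  rw [Real.log_div hb.ne' ha.ne'] at h
  have h3 : (1 - 1 / a) * (a - b) = (a - b) - (1 - b / a) := by field_simp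
  linarith

/-- Lemma 2.2: `δ_n^α (x - 1 - ln x) ≤ (1 - 1/x n) · δ_n^α x`. -/
theorem stmt_3 (α Δt : ℝ) (hα0 : 0 < α) (hα1 : α < 1) (hΔt : 0 < Δt)
    (x : ℕ → ℝ) (hx : ∀ j, 0 < x j) (n : ℕ) (hn : 1 ≤ n) :
    L1 α Δt (fun j => x j - 1 - Real.log (x j)) n ≤ (1 - 1 / x n) * L1 α Δt x n := by
  have hβ0 : (0 : ℝ) < 1 - α := by linarith
  have hβ1 : (1 : ℝ) - α < 1 := by linarith
  have hc : 0 ≤ Δt ^ (-α) / Real.Gamma (2 - α) :=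
    le_of_lt (div_pos (Real.rpow_pos_of_pos hΔt _) (Real.Gamma_pos_of_pos (by linarith)))
  rw [L1_eq α Δt hα0 hα1 _ n hn, L1_eq α Δt hα0 hα1 x n hn, mul_left_comm]
  refine mul_le_mul_of_nonneg_left ?_ hc
  rw [mul_add, Finset.mul_sum]
  refine add_le_add ?_ (Finset.sum_le_sum fun j hj => ?_)
  · have hkey := key_ineq (x n) (x 0) (hx n) (hx 0)
    have hB := (bcoef_pos hβ0 (n - 1)).le
    calc bcoef (1 - α) (n - 1) * ((x n - 1 - Real.log (x n)) - (x 0 - 1 - Real.log (x 0)))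
        ≤ bcoef (1 - α) (n - 1) * ((1 - 1 / x n) * (x n - x 0)) :=
          mul_le_mul_of_nonneg_left hkey hB
      _ = (1 - 1 / x n) * (bcoef (1 - α) (n - 1) * (x n - x 0)) := by ring
  · have hkey := key_ineq (x n) (x (n - j)) (hx n) (hx (n - j))
    have hcoef : 0 ≤ bcoef (1 - α) (j - 1) - bcoef (1 - α) j := by
      rw [Finset.mem_Icc] at hj
      obtain ⟨k, rfl⟩ : ∃ k, j = k + 1 := ⟨j - 1, by omega⟩
      simpa using sub_nonneg.mpr (bcoef_succ_le hβ0 hβ1 k)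
    calc (bcoef (1 - α) (j - 1) - bcoef (1 - α) j) *
          ((x n - 1 - Real.log (x n)) - (x (n - j) - 1 - Real.log (x (n - j))))
        ≤ (bcoef (1 - α) (j - 1) - bcoef (1 - α) j) * ((1 - 1 / x n) * (x n - x (n - j))) :=
          mul_le_mul_of_nonneg_left hkey hcoef
      _ = (1 - 1 / x n) * ((bcoef (1 - α) (j - 1) - bcoef (1 - α) j) * (x n - x (n - j))) := by
          ring
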